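/- Let H be a Hilbert space with orthogonal decomposition H = H⁰ ⊕ H⁺ ⊕ H⁻ where H⁰ and H⁻ are finite-dimensional, and let B(θ) ∈ L_s(H) be a bounded self-adjoint operator with Ker B(θ) = H⁰, (B(θ)u,u) ≥ 2a₀‖u‖² for all u ∈ H⁺, and (B(θ)u,u) ≤ −2a₀‖u‖² for all u ∈ H⁻, for some a₀ > 0. Suppose B : V ∩ X → L_s(H) (X dense in H, V a neighborhood of θ) decomposes as B(x) = P(x) + Q(x) with: for any sequence x_n ∈ V∩X, ‖x_n‖→0, there exist C₀>0 and n₀ with (P(x_n)u,u) ≥ C₀‖u‖² for all u ∈ H and n ≥ n₀; P(x_n)u → P(θ)u for all u ∈ H; each Q(x) compact, and Q continuous at θ in L(H)-norm along ‖·‖_H. Then there exist a neighborhood U ⊆ V of θ in H and a₁ ∈ (0, 2a₀] such that (B(x)u, u) ≥ a₁‖u‖² for all x ∈ U ∩ X and all u ∈ H⁺. -/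

import Mathlib

open scoped RealInnerProductSpace

open Filter

lemma weak_subseq {H : Type*} [NormedAddCommGroup H] [InnerProductSpace ℝ H] [CompleteSpace H]
    (u : ℕ → H) (M : ℝ) (hM : ∀ n, ‖u n‖ ≤ M) :
    ∃ φ : ℕ → ℕ, StrictMono φ ∧ ∃ w : H,
      ∀ v : H, Tendsto (fun n => ⟪v, u (φ n)⟫) atTop (nhds ⟪v, w⟫) := by
  have hM0 : 0 ≤ M := le_trans (norm_nonneg _) (hM 0)
  -- diagonal subsequence via compactness of [-M²,M²]^ℕ
  set S : Set (ℕ → ℝ) := Set.univ.pi (fun _ => Set.Icc (-(M*M)) (M*M)) with hSdef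
  have hS : IsCompact S := isCompact_univ_pi (fun _ => isCompact_Icc)
  have hmem : ∀ n, (fun m => ⟪u m, u n⟫) ∈ S := by
    intro n
    intro m _
    rw [Set.mem_Icc, ← abs_le]
    calc |⟪u m, u n⟫| ≤ ‖u m‖ * ‖u n‖ := abs_real_inner_le_norm _ _
      _ ≤ M * M := mul_le_mul (hM m) (hM n) (norm_nonneg _) hM0
  obtain ⟨g, -, φ, hφ, htend⟩ := hS.isSeqCompact hmem
  have h1 : ∀ m, Tendsto (fun n => ⟪u m, u (φ n)⟫) atTop (nhds (g m)) := by
    intro m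
    exact (tendsto_pi_nhds.mp htend) m
  refine ⟨φ, hφ, ?_⟩
  set K := (Submodule.span ℝ (Set.range u)).topologicalClosure with hKdef
  haveI : CompleteSpace K := (Submodule.isClosed_topologicalClosure (Submodule.span ℝ (Set.range u))).completeSpace_coe
  have huK : ∀ n, u n ∈ K :=
    fun n => (Submodule.le_topologicalClosure _) (Submodule.subset_span ⟨n, rfl⟩)
  -- limit exists for elements of the span
  have hspan : ∀ v ∈ Submodule.span ℝ (Set.range u),
      ∃ l : ℝ, Tendsto (fun n => ⟪v, u (φ n)⟫) atTop (nhds l) := by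
    intro v hv
    induction hv using Submodule.span_induction with
    | mem x hx => obtain ⟨m, rfl⟩ := hx; exact ⟨g m, h1 m⟩
    | zero => exact ⟨0, by simpa using tendsto_const_nhds⟩
    | add x y hx hy ihx ihy =>
        obtain ⟨l1, h1'⟩ := ihx; obtain ⟨l2, h2'⟩ := ihy
        exact ⟨l1 + l2, by simpa [inner_add_left] using h1'.add h2'⟩
    | smul c x hx ihx =>
        obtain ⟨l, hl⟩ := ihx
        exact ⟨c * l, by simpa [real_inner_smul_left] using hl.const_mul c⟩
  -- limit exists for elements of K (cauchy argument)
  have hK : ∀ v : H, v ∈ K → ∃ l : ℝ, Tendsto (fun n => ⟪v, u (φ n)⟫) atTop (nhds l) := by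
    intro v hv
    have hcs : CauchySeq (fun n => ⟪v, u (φ n)⟫) := by
      rw [Metric.cauchySeq_iff]
      intro ε hε
      have hε3 : 0 < ε / (3 * (M + 1)) := by positivity
      obtain ⟨w', hw'K, hw'⟩ : ∃ w' ∈ (Submodule.span ℝ (Set.range u) : Set H),
          ‖v - w'‖ < ε / (3 * (M + 1)) := by
        have hv' : v ∈ closure ((Submodule.span ℝ (Set.range u)) : Set H) := by
          rw [← Submodule.topologicalClosure_coe]; exact hv
        rw [Metric.mem_closure_iff] at hv'
        have this := hv'
        obtain ⟨w', hw'K, hd⟩ := this _ hε3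
        exact ⟨w', hw'K, by rwa [dist_eq_norm] at hd⟩
      obtain ⟨l, hl⟩ := hspan w' hw'K
      have hcs' : CauchySeq (fun n => ⟪w', u (φ n)⟫) := hl.cauchySeq
      rw [Metric.cauchySeq_iff] at hcs'
      obtain ⟨N, hN⟩ := hcs' (ε / 3) (by positivity)
      refine ⟨N, fun m hm n hn => ?_⟩
      have key : ∀ k, |⟪v, u (φ k)⟫ - ⟪w', u (φ k)⟫| ≤ ε / (3 * (M + 1)) * M := by
        intro k
        rw [← inner_sub_left]
        calc |⟪v - w', u (φ k)⟫| ≤ ‖v - w'‖ * ‖u (φ k)‖ := abs_real_inner_le_norm _ _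
          _ ≤ ε / (3 * (M + 1)) * M :=
            mul_le_mul hw'.le (hM _) (norm_nonneg _) hε3.le
      have hMlt : ε / (3 * (M + 1)) * M < ε / 3 := by
        rw [div_mul_eq_mul_div, div_lt_div_iff₀ (by positivity) (by positivity)]
        nlinarith
      have := hN m hm n hn
      rw [Real.dist_eq] at this ⊢
      calc |⟪v, u (φ m)⟫ - ⟪v, u (φ n)⟫|
          ≤ |⟪v, u (φ m)⟫ - ⟪w', u (φ m)⟫| + |⟪w', u (φ m)⟫ - ⟪w', u (φ n)⟫|
            + |⟪w', u (φ n)⟫ - ⟪v, u (φ n)⟫| := by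
            have := abs_sub_le (⟪v, u (φ m)⟫) (⟪w', u (φ m)⟫) (⟪v, u (φ n)⟫)
            have h2 := abs_sub_le (⟪w', u (φ m)⟫) (⟪w', u (φ n)⟫) (⟪v, u (φ n)⟫)
            linarith
        _ < ε := by
            have k1 := key m; have k2 := key n
            rw [abs_sub_comm (⟪w', u (φ n)⟫)] at *
            linarith
    exact cauchySeq_tendsto_of_complete hcs
  -- limit exists for all v
  have hall : ∀ v : H, ∃ l : ℝ, Tendsto (fun n => ⟪v, u (φ n)⟫) atTop (nhds l) := by
    intro v
    obtain ⟨l, hl⟩ := hK ((K.orthogonalProjectionOnto v : H)) (K.orthogonalProjectionOnto v).2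
    refine ⟨l, ?_⟩
    have horth : ∀ n, ⟪v - (K.orthogonalProjectionOnto v : H), u (φ n)⟫ = 0 := by
      intro n
      have := Submodule.sub_starProjection_mem_orthogonal (K := K) v
      exact (Submodule.mem_orthogonal' K _).mp this _ (huK _)
    have : (fun n => ⟪v, u (φ n)⟫) =
        fun n => ⟪(K.orthogonalProjectionOnto v : H), u (φ n)⟫ := by
      funext n
      have := horth n
      rw [inner_sub_left] at this
      linarith
    rw [this]; exact hl
  choose L hL using hall
  have hadd : ∀ v₁ v₂ : H, L (v₁ + v₂) = L v₁ + L v₂ := by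
    intro v₁ v₂
    refine tendsto_nhds_unique (hL _) ?_
    simpa [inner_add_left] using (hL v₁).add (hL v₂)
  have hsmul : ∀ (c : ℝ) (v : H), L (c • v) = c * L v := by
    intro c v
    refine tendsto_nhds_unique (hL _) ?_
    simpa [real_inner_smul_left] using (hL v).const_mul c
  have hbound : ∀ v : H, ‖L v‖ ≤ M * ‖v‖ := by
    intro v
    rw [Real.norm_eq_abs]
    have habs : Tendsto (fun n => |⟪v, u (φ n)⟫|) atTop (nhds |L v|) := (hL v).abs
    refine le_of_tendsto habs (Filter.Eventually.of_forall fun n => ?_)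
    calc |⟪v, u (φ n)⟫| ≤ ‖v‖ * ‖u (φ n)‖ := abs_real_inner_le_norm _ _
      _ ≤ ‖v‖ * M := by have := hM (φ n); nlinarith [norm_nonneg v]
      _ = M * ‖v‖ := mul_comm _ _
  let f : H →L[ℝ] ℝ := LinearMap.mkContinuous
    { toFun := L, map_add' := hadd, map_smul' := hsmul } M hbound
  refine ⟨(InnerProductSpace.toDual ℝ H).symm f, fun v => ?_⟩
  have : ⟪v, (InnerProductSpace.toDual ℝ H).symm f⟫ = L v := by
    rw [real_inner_comm, InnerProductSpace.toDual_symm_apply]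
    rfl
  rw [this]; exact hL v


lemma compact_weaknull {H : Type*} [NormedAddCommGroup H] [InnerProductSpace ℝ H]
    [CompleteSpace H] {f : H →L[ℝ] H} (hf : IsCompactOperator f)
    (b : ℕ → H) (M : ℝ) (hb : ∀ n, ‖b n‖ ≤ M)
    (hweak : ∀ v : H, Tendsto (fun n => ⟪v, b n⟫) atTop (nhds 0)) :
    Tendsto (fun n => f (b n)) atTop (nhds 0) := by
  obtain ⟨K, hK, hKsub⟩ := hf.image_closedBall_subset_compact (𝕜₁ := ℝ) (M + 1)
  have hmem : ∀ n, f (b n) ∈ K := by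
    intro n
    refine hKsub ⟨b n, ?_, rfl⟩
    simpa [Metric.mem_closedBall, dist_eq_norm] using le_trans (hb n) (by linarith)
  refine tendsto_of_subseq_tendsto fun ns hns => ?_
  obtain ⟨q, -, ms, hms, hqt⟩ := hK.isSeqCompact (x := fun n => f (b (ns n))) (fun n => hmem _)
  have hq0 : q = 0 := by
    have hz : ∀ v : H, ⟪v, q⟫ = 0 := by
      intro v
      have h1 : Tendsto (fun k => ⟪v, f (b (ns (ms k)))⟫) atTop (nhds ⟪v, q⟫) :=
        (Tendsto.inner tendsto_const_nhds hqt)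
      have h2 : Tendsto (fun k => ⟪v, f (b (ns (ms k)))⟫) atTop (nhds 0) := by
        have heq : ∀ n : ℕ, ⟪v, f (b n)⟫ = ⟪(ContinuousLinearMap.adjoint f) v, b n⟫ := by
          intro n
          rw [ContinuousLinearMap.adjoint_inner_left]
        have := (hweak ((ContinuousLinearMap.adjoint f) v)).comp
          ((hns.comp hms.tendsto_atTop))
        simpa [heq, Function.comp_def] using this
      exact tendsto_nhds_unique h1 h2
    have := hz q
    rwa [real_inner_self_eq_norm_sq, pow_eq_zero_iff (by norm_num), norm_eq_zero] at this
  exact ⟨ms, by rwa [hq0] at hqt⟩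


set_option maxHeartbeats 1000000 in
/-- Uniform positive-definiteness of `B(x)` on `H⁺` for `x` near the origin
(Lemma 3.4(i)): under the decomposition `B(x) = P(x) + Q(x)` with `P` uniformly
positive along sequences tending to `0`, `P` strongly convergent to `P(0)`,
`Q(x)` compact and `Q` norm-continuous at `0` along `X`, and the spectral-gap bounds
for `B(0)`, there are a neighborhood `U ⊆ V` of `0` and `a₁ ∈ (0, 2a₀]` with
`(B(x)u, u) ≥ a₁‖u‖²` for all `x ∈ U ∩ X` and `u ∈ Hp`. -/
theorem statement8 {H : Type*} [NormedAddCommGroup H] [InnerProductSpace ℝ H]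
    [CompleteSpace H]
    (H0 Hp Hm : Submodule ℝ H)
    (hfin0 : FiniteDimensional ℝ H0) (hfinm : FiniteDimensional ℝ Hm)
    (horth1 : Hp ≤ H0ᗮ) (horth2 : Hm ≤ H0ᗮ) (horth3 : Hp ≤ Hmᗮ)
    (hspan : H0 ⊔ Hp ⊔ Hm = ⊤)
    (X : Submodule ℝ H) (hX : Dense (X : Set H))
    (V : Set H) (hV : V ∈ nhds (0 : H))
    (B P Q : H → H →L[ℝ] H)
    (hsa : ∀ x, IsSelfAdjoint (B x))
    (hker : LinearMap.ker (B 0 : H →ₗ[ℝ] H) = H0)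
    (a₀ : ℝ) (ha₀ : 0 < a₀)
    (hpos : ∀ u ∈ Hp, 2 * a₀ * ‖u‖ ^ 2 ≤ ⟪B 0 u, u⟫)
    (hneg : ∀ u ∈ Hm, ⟪B 0 u, u⟫ ≤ -(2 * a₀) * ‖u‖ ^ 2)
    (hdec : ∀ x ∈ V ∩ X, B x = P x + Q x)
    (hPseq : ∀ x : ℕ → H, (∀ n, x n ∈ V ∩ X) →
      Filter.Tendsto (fun n => ‖x n‖) Filter.atTop (nhds 0) →
      ∃ C₀ > (0 : ℝ), ∃ n₀ : ℕ, ∀ n ≥ n₀, ∀ u : H, C₀ * ‖u‖ ^ 2 ≤ ⟪P (x n) u, u⟫)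
    (hPconv : ∀ x : ℕ → H, (∀ n, x n ∈ V ∩ X) →
      Filter.Tendsto (fun n => ‖x n‖) Filter.atTop (nhds 0) →
      ∀ u : H, Filter.Tendsto (fun n => P (x n) u) Filter.atTop (nhds (P 0 u)))
    (hQcomp : ∀ x ∈ V ∩ X, IsCompactOperator (Q x))
    (hQcont : ∀ ε > (0 : ℝ), ∃ δ > (0 : ℝ), ∀ x ∈ V ∩ X, ‖x‖ < δ →
      ‖Q x - Q 0‖ < ε) :
    ∃ U ∈ nhds (0 : H), U ⊆ V ∧ ∃ a₁ : ℝ, 0 < a₁ ∧ a₁ ≤ 2 * a₀ ∧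
      ∀ x ∈ U ∩ X, ∀ u ∈ Hp, a₁ * ‖u‖ ^ 2 ≤ ⟪B x u, u⟫ := by
  by_contra hcon
  push_neg at hcon
  obtain ⟨r, hr, hrV⟩ := Metric.mem_nhds_iff.mp hV
  have h0VX : (0 : H) ∈ V ∩ X := ⟨mem_of_mem_nhds hV, X.zero_mem⟩
  have hpick : ∀ n : ℕ, ∃ x ∈ Metric.ball (0 : H) (min r (1/(n+1))) ∩ X,
      ∃ u ∈ Hp, ⟪B x u, u⟫ < min (2*a₀) (1/(n+1)) * ‖u‖ ^ 2 := by
    intro n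
    have hδ : (0:ℝ) < min r (1/(n+1)) := lt_min hr (by positivity)
    exact hcon _ (Metric.ball_mem_nhds _ hδ)
      ((Metric.ball_subset_ball (min_le_left _ _)).trans hrV)
      _ (lt_min (by linarith) (by positivity)) (min_le_left _ _)
  choose x hxB u' hu' hlt using hpick
  have hxVX : ∀ n, x n ∈ V ∩ X := by
    intro n
    exact ⟨hrV (Metric.ball_subset_ball (min_le_left _ _) (hxB n).1), (hxB n).2⟩
  have hxnorm : ∀ n : ℕ, ‖x n‖ < 1/(n+1) := by
    intro n
    have := (hxB n).1
    rw [Metric.mem_ball, dist_zero_right] at this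
    exact this.trans_le (min_le_right _ _)
  have hone : Tendsto (fun n : ℕ => 1/((n:ℝ)+1)) atTop (nhds 0) :=
    tendsto_one_div_add_atTop_nhds_zero_nat
  have hx0 : Tendsto (fun n => ‖x n‖) atTop (nhds 0) :=
    squeeze_zero (fun n => norm_nonneg _) (fun n => (hxnorm n).le) hone
  have hu'ne : ∀ n, u' n ≠ 0 := by
    intro n hn
    have := hlt n
    rw [hn] at this
    simp at this
  set v : ℕ → H := fun n => ‖u' n‖⁻¹ • u' n with hvdef
  have hv1 : ∀ n, ‖v n‖ = 1 := fun n => norm_smul_inv_norm (hu'ne n)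
  have hvHp : ∀ n, v n ∈ Hp := fun n => Submodule.smul_mem _ _ (hu' n)
  have hvlt : ∀ n : ℕ, ⟪B (x n) (v n), v n⟫ < 1/(n+1) := by
    intro n
    have hc : (0:ℝ) < ‖u' n‖⁻¹ := inv_pos.2 (norm_pos_iff.2 (hu'ne n))
    have hcalc : ⟪B (x n) (v n), v n⟫ = ‖u' n‖⁻¹ * (‖u' n‖⁻¹ * ⟪B (x n) (u' n), u' n⟫) := by
      simp only [hvdef, map_smul, real_inner_smul_left, real_inner_smul_right]
    have h2 : ‖u' n‖⁻¹ * (‖u' n‖⁻¹ * ⟪B (x n) (u' n), u' n⟫)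
        < ‖u' n‖⁻¹ * (‖u' n‖⁻¹ * (min (2*a₀) (1/(n+1)) * ‖u' n‖ ^ 2)) := by
      exact mul_lt_mul_of_pos_left (mul_lt_mul_of_pos_left (hlt n) hc) hc
    have h3 : ‖u' n‖⁻¹ * (‖u' n‖⁻¹ * (min (2*a₀) (1/(n+1)) * ‖u' n‖ ^ 2))
        = min (2*a₀) (1/((n:ℝ)+1)) := by
      have hne : ‖u' n‖ ≠ 0 := norm_ne_zero_iff.2 (hu'ne n)
      have h : ‖u' n‖⁻¹ * ‖u' n‖ = 1 := inv_mul_cancel₀ hne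
      linear_combination (min (2*a₀) (1/((n:ℝ)+1)) * (‖u' n‖⁻¹ * ‖u' n‖ + 1)) * h
    rw [hcalc]
    calc ‖u' n‖⁻¹ * (‖u' n‖⁻¹ * ⟪B (x n) (u' n), u' n⟫)
        < min (2*a₀) (1/((n:ℝ)+1)) := by rw [← h3]; exact h2
      _ ≤ 1/((n:ℝ)+1) := min_le_right _ _
  -- weakly convergent subsequence
  obtain ⟨φ, hφ, w, hw⟩ := weak_subseq v 1 (fun n => (hv1 n).le)
  set y : ℕ → H := fun n => v (φ n) with hydef
  set z : ℕ → H := fun n => x (φ n) with hzdef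
  have hz : ∀ n, z n ∈ V ∩ X := fun n => hxVX (φ n)
  have hz0 : Tendsto (fun n => ‖z n‖) atTop (nhds 0) := by
    have := hx0.comp hφ.tendsto_atTop
    simpa [Function.comp_def] using this
  obtain ⟨C₀, hC₀, n₀, hP⟩ := hPseq z hz hz0
  have hBz : ∀ n, B (z n) = P (z n) + Q (z n) := fun n => hdec _ (hz n)
  have hB0 : B 0 = P 0 + Q 0 := hdec 0 h0VX
  have hsym : ∀ (x' : H) (a b : H), ⟪B x' a, b⟫ = ⟪a, B x' b⟫ := by
    intro x' a b
    exact (ContinuousLinearMap.isSelfAdjoint_iff_isSymmetric.mp (hsa x')) a b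
  -- norm continuity of Q along z
  have hQnorm : Tendsto (fun n => ‖Q (z n) - Q 0‖) atTop (nhds 0) := by
    rw [Metric.tendsto_atTop]
    intro ε hε
    obtain ⟨δ, hδ, hQ⟩ := hQcont ε hε
    rw [Metric.tendsto_atTop] at hz0
    obtain ⟨N, hN⟩ := hz0 δ hδ
    refine ⟨N, fun n hn => ?_⟩
    have h2 : ‖z n‖ < δ := by
      have := hN n hn
      rwa [Real.dist_eq, sub_zero, abs_of_nonneg (norm_nonneg _)] at this
    rw [Real.dist_eq, sub_zero, abs_of_nonneg (norm_nonneg _)]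
    exact hQ _ (hz n) h2
  -- weak nullity of y - w
  have hwnull : ∀ v' : H, Tendsto (fun n => ⟪v', y n - w⟫) atTop (nhds 0) := by
    intro v'
    have := (hw v').sub (tendsto_const_nhds (x := ⟪v', w⟫))
    simpa [inner_sub_right] using this
  -- compactness: Q 0 (y n - w) → 0
  have hywb : ∀ n, ‖y n - w‖ ≤ 1 + ‖w‖ := by
    intro n
    calc ‖y n - w‖ ≤ ‖y n‖ + ‖w‖ := norm_sub_le _ _
      _ = 1 + ‖w‖ := by rw [hv1 (φ n)]
  have hQ0w : Tendsto (fun n => Q 0 (y n - w)) atTop (nhds 0) :=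
    compact_weaknull (hQcomp 0 h0VX) _ (1 + ‖w‖) hywb hwnull
  -- the quadratic form of Q (z n) on y n - w tends to 0
  have hQ0wn : Tendsto (fun n => ‖Q 0 (y n - w)‖) atTop (nhds 0) := by
    simpa using hQ0w.norm
  have hcn : Tendsto (fun n => ⟪Q (z n) (y n - w), y n - w⟫) atTop (nhds 0) := by
    apply squeeze_zero_norm
      (a := fun n => (‖Q (z n) - Q 0‖ * (1 + ‖w‖) + ‖Q 0 (y n - w)‖) * (1 + ‖w‖))
    · intro n
      have hsplit : Q (z n) (y n - w) = (Q (z n) - Q 0) (y n - w) + Q 0 (y n - w) := by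
        simp [ContinuousLinearMap.sub_apply]
      have h1 : ‖(Q (z n) - Q 0) (y n - w)‖ ≤ ‖Q (z n) - Q 0‖ * ‖y n - w‖ :=
        (Q (z n) - Q 0).le_opNorm _
      have hD : (0:ℝ) ≤ 1 + ‖w‖ := by positivity
      have hd := hywb n
      have hd0 : (0:ℝ) ≤ ‖y n - w‖ := norm_nonneg _
      have hq0 : (0:ℝ) ≤ ‖Q (z n) - Q 0‖ := norm_nonneg _
      have hb0 : (0:ℝ) ≤ ‖Q 0 (y n - w)‖ := norm_nonneg _
      rw [Real.norm_eq_abs, hsplit, inner_add_left]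
      calc |⟪(Q (z n) - Q 0) (y n - w), y n - w⟫ + ⟪Q 0 (y n - w), y n - w⟫|
          ≤ |⟪(Q (z n) - Q 0) (y n - w), y n - w⟫| + |⟪Q 0 (y n - w), y n - w⟫| :=
            abs_add_le _ _
        _ ≤ ‖(Q (z n) - Q 0) (y n - w)‖ * ‖y n - w‖ + ‖Q 0 (y n - w)‖ * ‖y n - w‖ :=
            add_le_add (abs_real_inner_le_norm _ _) (abs_real_inner_le_norm _ _)
        _ ≤ (‖Q (z n) - Q 0‖ * (1 + ‖w‖) + ‖Q 0 (y n - w)‖) * (1 + ‖w‖) := by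
            nlinarith [mul_nonneg hq0 (sub_nonneg.mpr hd), mul_nonneg hb0 (sub_nonneg.mpr hd)]
    · have := ((hQnorm.mul_const (1 + ‖w‖)).add hQ0wn).mul_const (1 + ‖w‖)
      simpa using this
  -- B (z n) w → B 0 w strongly
  have hQzw : Tendsto (fun n => Q (z n) w) atTop (nhds (Q 0 w)) := by
    rw [tendsto_iff_norm_sub_tendsto_zero]
    apply squeeze_zero (fun n => norm_nonneg _)
      (g := fun n => ‖Q (z n) - Q 0‖ * ‖w‖)
    · intro n
      have := (Q (z n) - Q 0).le_opNorm w
      simpa [ContinuousLinearMap.sub_apply] using this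
    · simpa using hQnorm.mul_const ‖w‖
  have hPzw := hPconv z hz hz0 w
  have hBzw : Tendsto (fun n => B (z n) w) atTop (nhds (B 0 w)) := by
    have h := hPzw.add hQzw
    have heq : (fun n => B (z n) w) = fun n => P (z n) w + Q (z n) w := by
      funext n; rw [hBz n]; rfl
    have heq0 : B 0 w = P 0 w + Q 0 w := by rw [hB0]; rfl
    rw [heq, heq0]; exact h
  -- t n : ⟪B (z n) w, y n⟫ → ⟪B 0 w, w⟫
  have ht : Tendsto (fun n => ⟪B (z n) w, y n⟫) atTop (nhds ⟪B 0 w, w⟫) := by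
    have h1 : Tendsto (fun n => ⟪B (z n) w - B 0 w, y n⟫) atTop (nhds 0) := by
      apply squeeze_zero_norm (a := fun n => ‖B (z n) w - B 0 w‖)
      · intro n
        have := abs_real_inner_le_norm (B (z n) w - B 0 w) (y n)
        rw [hv1 (φ n)] at this
        simpa using this
      · exact tendsto_iff_norm_sub_tendsto_zero.mp hBzw
    have h2 : Tendsto (fun n => ⟪B 0 w, y n⟫) atTop (nhds ⟪B 0 w, w⟫) := hw (B 0 w)
    have := h1.add h2
    simpa [inner_sub_left] using this
  have hr' : Tendsto (fun n => ⟪B (z n) w, w⟫) atTop (nhds ⟪B 0 w, w⟫) :=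
    hBzw.inner tendsto_const_nhds
  -- ‖y n - w‖² → 1 - ‖w‖²
  have hnrm : Tendsto (fun n => ‖y n - w‖^2) atTop (nhds (1 - ‖w‖^2)) := by
    have heq : ∀ n, ‖y n - w‖^2 = 1 - 2*⟪w, y n⟫ + ‖w‖^2 := by
      intro n
      have := norm_sub_sq_real (y n) w
      rw [hv1 (φ n), real_inner_comm w (y n)] at this
      rw [this]; ring
    have h2 : Tendsto (fun n => 1 - 2*⟪w, y n⟫ + ‖w‖^2) atTop
        (nhds (1 - 2*⟪w, w⟫ + ‖w‖^2)) :=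
      (tendsto_const_nhds.sub ((hw w).const_mul 2)).add tendsto_const_nhds
    rw [real_inner_self_eq_norm_sq] at h2
    simp only [heq]
    convert h2 using 2
    ring
  -- upper bound
  have hup : ∀ n : ℕ, ⟪B (z n) (y n), y n⟫ < 1/((n:ℝ)+1) := by
    intro n
    calc ⟪B (z n) (y n), y n⟫ < 1/((φ n : ℝ)+1) := hvlt (φ n)
      _ ≤ 1/((n:ℝ)+1) := by
        apply one_div_le_one_div_of_le (by positivity)
        have : (n:ℝ) ≤ (φ n : ℝ) := Nat.cast_le.mpr hφ.le_apply
        linarith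
  -- lower bound
  have hlow : ∀ n ≥ n₀, C₀ * ‖y n - w‖^2 + ⟪Q (z n) (y n - w), y n - w⟫
      + 2*⟪B (z n) w, y n⟫ - ⟪B (z n) w, w⟫ ≤ ⟪B (z n) (y n), y n⟫ := by
    intro n hn
    have hexp : ⟪B (z n) (y n), y n⟫ = ⟪B (z n) (y n - w), y n - w⟫
        + 2*⟪B (z n) w, y n⟫ - ⟪B (z n) w, w⟫ := by
      have h1 : B (z n) (y n - w) = B (z n) (y n) - B (z n) w := map_sub _ _ _
      have h2 : ⟪B (z n) (y n), w⟫ = ⟪B (z n) w, y n⟫ := by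
        rw [hsym, real_inner_comm]
      rw [h1, inner_sub_left, inner_sub_right, inner_sub_right]
      linarith
    have hsplit : ⟪B (z n) (y n - w), y n - w⟫ = ⟪P (z n) (y n - w), y n - w⟫
        + ⟪Q (z n) (y n - w), y n - w⟫ := by
      rw [hBz n]
      simp [ContinuousLinearMap.add_apply, inner_add_left]
    have hPn := hP n hn (y n - w)
    rw [hexp, hsplit]
    linarith
  -- limit of the lower bound
  have hslim : Tendsto (fun n => C₀ * ‖y n - w‖^2 + ⟪Q (z n) (y n - w), y n - w⟫
      + 2*⟪B (z n) w, y n⟫ - ⟪B (z n) w, w⟫) atTop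
      (nhds (C₀ * (1 - ‖w‖^2) + ⟪B 0 w, w⟫)) := by
    have h := (((hnrm.const_mul C₀).add hcn).add (ht.const_mul 2)).sub hr'
    convert h using 2
    ring
  have hfinal : C₀ * (1 - ‖w‖^2) + ⟪B 0 w, w⟫ ≤ 0 := by
    refine le_of_tendsto_of_tendsto hslim hone ?_
    rw [Filter.EventuallyLE, eventually_atTop]
    exact ⟨n₀, fun n hn => (hlow n hn).trans (hup n).le⟩
  -- w belongs to Hp
  have horthlim : ∀ s ∈ H0 ⊔ Hm, ⟪s, w⟫ = 0 := by
    intro s hs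
    obtain ⟨s0, hs0, sm, hsm, rfl⟩ := Submodule.mem_sup.mp hs
    have hz' : ∀ n, ⟪s0 + sm, y n⟫ = 0 := by
      intro n
      have h0 : ⟪s0, y n⟫ = 0 :=
        (Submodule.mem_orthogonal _ _).mp (horth1 (hvHp (φ n))) s0 hs0
      have hm : ⟪sm, y n⟫ = 0 :=
        (Submodule.mem_orthogonal _ _).mp (horth3 (hvHp (φ n))) sm hsm
      rw [inner_add_left, h0, hm, add_zero]
    have htd : Tendsto (fun n => ⟪s0 + sm, y n⟫) atTop _ := hw (s0 + sm)
    simp only [hz'] at htd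
    exact tendsto_nhds_unique htd tendsto_const_nhds
  have hwtop : w ∈ H0 ⊔ Hp ⊔ Hm := by rw [hspan]; trivial
  obtain ⟨pq, hpq, c, hc, hsum⟩ := Submodule.mem_sup.mp hwtop
  obtain ⟨a, ha, b, hb, rfl⟩ := Submodule.mem_sup.mp hpq
  have hac : a + c = 0 := by
    have hmem : a + c ∈ H0 ⊔ Hm := Submodule.mem_sup.mpr ⟨a, ha, c, hc, rfl⟩
    have h1 : ⟪a + c, w⟫ = 0 := horthlim _ hmem
    have h2 : ⟪a, b⟫ = 0 := (Submodule.mem_orthogonal _ _).mp (horth1 hb) a ha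
    have h3 : ⟪c, b⟫ = 0 := (Submodule.mem_orthogonal _ _).mp (horth3 hb) c hc
    have hwb : w - b = a + c := by rw [← hsum]; abel
    have h4 : ⟪a + c, a + c⟫ = 0 := by
      calc ⟪a + c, a + c⟫ = ⟪a + c, w - b⟫ := by rw [hwb]
        _ = ⟪a + c, w⟫ - ⟪a + c, b⟫ := by rw [inner_sub_right]
        _ = 0 := by rw [h1, inner_add_left, h2, h3]; ring
    exact inner_self_eq_zero.mp h4
  have hwHp : w ∈ Hp := by
    have hwb : w = b := by
      rw [← hsum]
      have : a + b + c = b + (a + c) := by abel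
      rw [this, hac, add_zero]
    rw [hwb]; exact hb
  -- ‖w‖ ≤ 1
  have hw1 : ‖w‖ ≤ 1 := by
    have hle : ⟪w, w⟫ ≤ ‖w‖ := by
      refine le_of_tendsto (hw w) (Filter.Eventually.of_forall fun n => ?_)
      have := real_inner_le_norm w (y n)
      rw [hv1 (φ n), mul_one] at this
      exact this
    rw [real_inner_self_eq_norm_sq] at hle
    nlinarith [norm_nonneg w]
  have hs2 : ‖w‖^2 ≤ 1 := pow_le_one₀ (norm_nonneg w) hw1
  have hs0 : (0:ℝ) ≤ ‖w‖^2 := by positivity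
  have hBw := hpos w hwHp
  rcases le_or_gt (‖w‖^2) (1/2) with hcase | hcase
  · nlinarith
  · nlinarith
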